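/- Let R = R_0 ⊕ R_1 ⊕ R_2 ⊕ ⋯ be a positively ℤ-graded algebra over a commutative ring C that is generated as a C-algebra by finitely many homogeneous elements. Then for every positive integer N there is a positive integer D with N < D such that every homogeneous element r of degree j > D can be written as r = Σ_i c_i u_{i,1} u_{i,2} ⋯ u_{i,m_i}, where each c_i ∈ C and each u_{i,k} is homogeneous of some degree ℓ with N ≤ ℓ < D. -/

import Mathlib

/-!
STATEMENT 0: If `R = ⊕ₙ Rₙ` is a positively graded algebra over a commutative ring `C`,
generated as a `C`-algebra by finitely many homogeneous elements, then for every `N > 0`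
there is `D > N` such that every homogeneous element of degree `j > D` is a `C`-linear
combination of products of homogeneous elements whose degrees `ℓ` satisfy `N ≤ ℓ < D`.
-/

universe u

/-- Greedy prefix extraction: from a list with degree-sum at least `k`, one can split off a
prefix whose degree-sum lies in `[k, k + L)`, provided all degrees are `≤ L`. -/
lemma exists_prefix_sum {R : Type u} (d : R → ℕ) (L : ℕ) :
    ∀ (l : List R) (k : ℕ), 0 < k → (∀ u ∈ l, d u ≤ L) → k ≤ (l.map d).sum →
      ∃ p t : List R, l = p ++ t ∧ k ≤ (p.map d).sum ∧ (p.map d).sum < k + L := by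
  intro l
  induction l with
  | nil => intro k hk _ hsum; simp at hsum; omega
  | cons a l ih =>
    intro k hk hle hsum
    simp only [List.map_cons, List.sum_cons] at hsum
    by_cases hak : k ≤ d a
    · refine ⟨[a], l, rfl, ?_, ?_⟩ <;> simp
      · exact hak
      · have := hle a (by simp)
        omega
    · have hda : d a < k := by omega
      obtain ⟨p, t, hpt, h1, h2⟩ := ih (k - d a) (by omega)
        (fun u hu => hle u (List.mem_cons_of_mem _ hu)) (by omega)
      refine ⟨a :: p, t, by simp [hpt], ?_, ?_⟩ <;> simp only [List.map_cons, List.sum_cons] <;> omega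

/-- Split a list with degree-sum at least `N` into nonempty consecutive blocks whose
degree-sums lie in `[N, 2N + L)`. -/
lemma exists_block_split {R : Type u} (d : R → ℕ) (N L : ℕ) (hN : 0 < N) :
    ∀ (n : ℕ) (l : List R), l.length ≤ n → (∀ u ∈ l, d u ≤ L) → N ≤ (l.map d).sum →
      ∃ bs : List (List R), bs ≠ [] ∧ bs.flatten = l ∧
        ∀ b ∈ bs, N ≤ (b.map d).sum ∧ (b.map d).sum < 2 * N + L := by
  intro n
  induction n with
  | zero =>
    intro l hlen _ hsum
    interval_cases h : l.length
    · rw [List.length_eq_zero_iff] at h; subst h; simp at hsum; omega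
  | succ n ih =>
    intro l hlen hle hsum
    obtain ⟨p, t, hpt, h1, h2⟩ := exists_prefix_sum d L l N hN hle hsum
    have hp_ne : p ≠ [] := by
      rintro rfl; simp at h1; omega
    have htlen : t.length ≤ n := by
      have := List.length_pos_iff.mpr hp_ne
      have : l.length = p.length + t.length := by rw [hpt]; simp
      omega
    by_cases hts : N ≤ (t.map d).sum
    · obtain ⟨bs, hbs_ne, hbs_fl, hbs⟩ := ih t htlen
        (fun u hu => hle u (by rw [hpt]; exact List.mem_append_right _ hu)) hts
      refine ⟨p :: bs, by simp, by simp [hbs_fl, hpt], ?_⟩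
      intro b hb
      rw [List.mem_cons] at hb
      rcases hb with rfl | hb
      · exact ⟨h1, by omega⟩
      · exact hbs b hb
    · refine ⟨[p ++ t], by simp, by simp [hpt], ?_⟩
      rintro b hb
      simp only [List.mem_singleton] at hb
      subst hb
      simp only [List.map_append, List.sum_append]
      omega

theorem large_degree_generation
    {C : Type u} {R : Type u} [CommRing C] [Ring R] [Algebra C R]
    (𝒜 : ℕ → Submodule C R) [GradedAlgebra 𝒜]
    (s : Finset R) (hhom : ∀ x ∈ s, SetLike.IsHomogeneousElem 𝒜 x)
    (hgen : Algebra.adjoin C (s : Set R) = ⊤)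
    (N : ℕ) (hN : 0 < N) :
    ∃ D : ℕ, N < D ∧ ∀ j : ℕ, D < j → ∀ r ∈ 𝒜 j,
      r ∈ Submodule.span C {x : R | ∃ l : List R, l ≠ [] ∧
        (∀ u ∈ l, ∃ ℓ : ℕ, N ≤ ℓ ∧ ℓ < D ∧ u ∈ 𝒜 ℓ) ∧ x = l.prod} := by
  classical
  -- a degree function for homogeneous elements
  set d : R → ℕ := fun x => if h : SetLike.IsHomogeneousElem 𝒜 x then h.choose else 0 with hd_def
  have hd : ∀ x ∈ s, x ∈ 𝒜 (d x) := by
    intro x hx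
    have h := hhom x hx
    simp only [hd_def, dif_pos h]
    exact h.choose_spec
  set L : ℕ := s.sup d with hL_def
  refine ⟨2 * N + L, by omega, ?_⟩
  intro j hj r hr
  set T : Submodule C R := Submodule.span C {x : R | ∃ l : List R, l ≠ [] ∧
      (∀ u ∈ l, ∃ ℓ : ℕ, N ≤ ℓ ∧ ℓ < 2 * N + L ∧ u ∈ 𝒜 ℓ) ∧ x = l.prod} with hT_def
  -- key: degree-j projection of any monomial in the generators lies in T
  have key : ∀ m ∈ Submonoid.closure (s : Set R), (DirectSum.decompose 𝒜 m j : R) ∈ T := by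
    intro m hm
    obtain ⟨l, hls, hlprod⟩ := Submonoid.exists_list_of_mem_closure hm
    have hml : m ∈ 𝒜 ((l.map d).sum) := by
      have := SetLike.list_prod_map_mem_graded (A := 𝒜) l d id
        (fun y hy => hd y (hls y hy))
      simpa [hlprod] using this
    by_cases hσ : (l.map d).sum = j
    · subst hσ
      rw [DirectSum.decompose_of_mem_same 𝒜 hml]
      have hsum : N ≤ (l.map d).sum := by omega
      obtain ⟨bs, hbs_ne, hbs_fl, hbs⟩ := exists_block_split d N L hN l.length l le_rfl
        (fun u hu => Finset.le_sup (hls u hu)) hsum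
      apply Submodule.subset_span
      refine ⟨bs.map List.prod, by simpa using hbs_ne, ?_, ?_⟩
      · intro u hu
        obtain ⟨b, hb, rfl⟩ := List.mem_map.mp hu
        refine ⟨(b.map d).sum, (hbs b hb).1, (hbs b hb).2, ?_⟩
        have := SetLike.list_prod_map_mem_graded (A := 𝒜) b d id
          (fun y hy => hd y (hls y (by rw [← hbs_fl]; exact List.mem_flatten.mpr ⟨b, hb, hy⟩)))
        simpa using this
      · rw [← hlprod, ← hbs_fl, List.prod_flatten]
    · rw [DirectSum.decompose_of_mem_ne 𝒜 hml hσ]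
      exact T.zero_mem
  -- r lies in the span of monomials
  have hrtop : r ∈ Subalgebra.toSubmodule (Algebra.adjoin C (s : Set R)) := by
    rw [hgen]; trivial
  rw [Algebra.adjoin_eq_span] at hrtop
  have main : (DirectSum.decompose 𝒜 r j : R) ∈ T := by
    refine Submodule.span_induction (p := fun x _ => (DirectSum.decompose 𝒜 x j : R) ∈ T)
      (fun x hx => key x hx) (by simp) ?_ ?_ hrtop
    · intro x y _ _ hx hy
      rw [DirectSum.decompose_add]
      simpa using T.add_mem hx hy
    · intro c x _ hx
      rw [DirectSum.decompose_smul]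
      simpa [DirectSum.smul_apply] using T.smul_mem c hx
  rwa [DirectSum.decompose_of_mem_same 𝒜 hr] at main
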